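/- Let K ⊆ ℂⁿ be a compact set and w = (w₁,…,w_s) : K → (0,∞)ˢ a continuous weight. For every r ∈ ℕ one has δ^{w,r}(K,U) ≥ (∏_{l=1}^{s} δ^{w_l,r}(K))^{1/s}. -/

import Mathlib

open MeasureTheory Filter Topology
open scoped BigOperators ComplexConjugate ENNReal NNReal

noncomputable section

/-- Points of ℂⁿ. -/
abbrev Pt (n : ℕ) := Fin n → ℂ

/-- The Hermitian space U ≅ ℂˢ with its standard Hermitian inner product. -/
abbrev Vec (s : ℕ) := EuclideanSpace ℂ (Fin s)

/-- The monomial x^β. -/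
def mono {n : ℕ} (β : Fin n → ℕ) (x : Pt n) : ℂ := ∏ i, x i ^ β i

/-- m_r := C(n+r, n), the dimension of the space of polynomials of degree ≤ r in n variables. -/
def mr (n r : ℕ) : ℕ := (n + r).choose n

/-- ℓ_r := Σ_{k=1}^{r} k (m_k − m_{k−1}). -/
def lr (n r : ℕ) : ℕ := ∑ k ∈ Finset.Icc 1 r, k * (mr n k - mr n (k - 1))

/-- `B` enumerates the multi-indices β ∈ ℕⁿ with |β| ≤ r. -/
def IsEnum {n : ℕ} (r m : ℕ) (B : Fin m → Fin n → ℕ) : Prop :=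
  Function.Injective B ∧ (∀ l, ∑ j, B l j ≤ r) ∧
    ∀ γ : Fin n → ℕ, (∑ j, γ j) ≤ r → ∃ l, B l = γ

/-- The basis polynomial q_{(l,i)}(x) := x^{β(l)} e_i of 𝒫_r(U). -/
def qb {n s m : ℕ} (B : Fin m → Fin n → ℕ) (j : Fin m × Fin s) (x : Pt n) : Vec s :=
  EuclideanSpace.single j.2 (mono (B j.1) x)

/-- f ⊙ w^r : componentwise multiplication by the r-th power of the weight w. -/
def wodot {n s : ℕ} (w : Pt n → Fin s → ℝ) (r : ℕ) (f : Pt n → Vec s) : Pt n → Vec s :=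
  fun x => WithLp.toLp 2 fun i => ((w x i : ℂ) ^ r) * f x i

/-- f ⊙ ω : componentwise multiplication by a real vector function ω. -/
def modot {n s : ℕ} (ω : Pt n → Fin s → ℝ) (f : Pt n → Vec s) : Pt n → Vec s :=
  fun x => WithLp.toLp 2 fun i => ((ω x i : ℂ)) * f x i

/-- The ℂˢ-valued polynomial of degree ≤ r with coefficients c (in the basis qb). -/
def poly {n s m : ℕ} (B : Fin m → Fin n → ℕ) (c : Fin m × Fin s → ℂ) (x : Pt n) : Vec s :=
  WithLp.toLp 2 fun i => ∑ l, c (l, i) * mono (B l) x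

/-- A scalar polynomial of degree ≤ r with coefficients c. -/
def spoly {n m : ℕ} (B : Fin m → Fin n → ℕ) (c : Fin m → ℂ) (x : Pt n) : ℂ :=
  ∑ l, c l * mono (B l) x

/-- The rank-one semimetric g_x(a,b) := conj(⟨v(x),a⟩)·⟨v(x),b⟩. -/
def gval {n s : ℕ} (v : Pt n → Vec s) (x : Pt n) (a b : Vec s) : ℂ :=
  conj (inner ℂ (v x) a : ℂ) * (inner ℂ (v x) b : ℂ)

lemma mono_continuous {n : ℕ} (β : Fin n → ℕ) : Continuous (mono β) := by
  unfold mono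
  exact continuous_finset_prod _ (fun i _ => (continuous_apply i).pow _)

/-- q_j ⊙ w^r as a continuous map on K, an element of the Banach space C(K, ℂˢ). -/
def qwCont {n s m : ℕ} (K : Set (Pt n)) (w : Pt n → Fin s → ℝ)
    (hw : ContinuousOn (fun x => w x) K) (B : Fin m → Fin n → ℕ) (r : ℕ)
    (j : Fin m × Fin s) : C(↥K, Vec s) :=
  ⟨fun x => wodot w r (qb B j) x.1, by
    unfold wodot qb
    refine (PiLp.continuous_toLp 2 _).comp (continuous_pi fun i => ?_)
    have hwc : Continuous fun x : ↥K => w x.1 i := by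
      have := hw.comp_continuous continuous_subtype_val (fun x : ↥K => x.2)
      exact (continuous_apply i).comp this
    have h1 : Continuous fun x : ↥K => ((w x.1 i : ℂ)) :=
      Complex.continuous_ofReal.comp hwc
    have h2 : Continuous fun x : ↥K =>
        (EuclideanSpace.single j.2 (mono (B j.1) x.1) : Vec s) i := by
      simp only [EuclideanSpace.single_apply]
      by_cases h : i = j.2
      · simp only [h, if_true]
        exact (mono_continuous (B j.1)).comp continuous_subtype_val
      · simp only [h, if_false]
        exact continuous_const
    exact (h1.pow r).mul h2⟩

/-- The quantity maximized in the definition of the scalar δ^{w_l,r}(K) :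
the supremum over tuples of points of K of |Vandermonde| · ∏ w_l^r. -/
def deltaSBase {n : ℕ} (K : Set (Pt n)) (wl : Pt n → ℝ) (r : ℕ)
    (B : Fin (mr n r) → Fin n → ℕ) : ℝ :=
  sSup {t : ℝ | ∃ x : Fin (mr n r) → Pt n, (∀ i, x i ∈ K) ∧
    t = ‖(Matrix.det (Matrix.of fun i j => mono (B j) (x i)))‖ * ∏ i, wl (x i) ^ r}

/-- The scalar r-th weighted transfinite diameter δ^{w_l,r}(K). -/
def deltaS {n : ℕ} (K : Set (Pt n)) (wl : Pt n → ℝ) (r : ℕ)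
    (B : Fin (mr n r) → Fin n → ℕ) : ℝ :=
  (deltaSBase K wl r B) ^ (((lr n r : ℕ) : ℝ)⁻¹)

/-- The quantity maximized in the definition of δ^{w,r}(K,U) : the supremum of
|det[T_i (q_j ⊙ w^r)]| over N-tuples of continuous linear functionals on C(K,ℂˢ)
of operator norm at most 1. -/
def deltaVBase {n : ℕ} (s : ℕ) (K : Set (Pt n)) [CompactSpace ↥K]
    (w : Pt n → Fin s → ℝ) (hw : ContinuousOn (fun x => w x) K)
    (r : ℕ) (B : Fin (mr n r) → Fin n → ℕ) : ℝ :=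
  sSup {t : ℝ | ∃ T : (Fin (mr n r) × Fin s) → (C(↥K, Vec s) →L[ℂ] ℂ),
    (∀ i, ‖T i‖ ≤ 1) ∧
    t = ‖(Matrix.det (Matrix.of fun i j => T i (qwCont K w hw B r j)))‖}

/-- The r-th weighted transfinite diameter δ^{w,r}(K,U). -/
def deltaV {n : ℕ} (s : ℕ) (K : Set (Pt n)) [CompactSpace ↥K]
    (w : Pt n → Fin s → ℝ) (hw : ContinuousOn (fun x => w x) K)
    (r : ℕ) (B : Fin (mr n r) → Fin n → ℕ) : ℝ :=
  (deltaVBase s K w hw r B) ^ (((s * lr n r : ℕ) : ℝ)⁻¹)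


lemma coord_norm_le {s : ℕ} (v : Vec s) (i : Fin s) : ‖v i‖ ≤ ‖v‖ := by
  have h := norm_inner_le_norm (𝕜 := ℂ) (EuclideanSpace.single i (1:ℂ)) v
  rwa [EuclideanSpace.inner_single_left, EuclideanSpace.norm_single, norm_one, one_mul,
    map_one, one_mul] at h

/-- δ^{w,r}(K,U) ≥ (∏_l δ^{w_l,r}(K))^{1/s}. -/
theorem stmt2 {n s : ℕ} (hn : 0 < n) (hs : 0 < s)
    (K : Set (Pt n)) [CompactSpace ↥K] (hK : IsCompact K)
    (w : Pt n → Fin s → ℝ) (hw : ContinuousOn (fun x => w x) K)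
    (hwpos : ∀ x ∈ K, ∀ i, 0 < w x i)
    (r : ℕ) (B : Fin (mr n r) → Fin n → ℕ) (hB : IsEnum r (mr n r) B) :
    (∏ l : Fin s, deltaS K (fun x => w x l) r B) ^ ((s : ℝ)⁻¹) ≤ deltaV s K w hw r B := by
  classical
  have hm : 0 < mr n r := Nat.choose_pos (Nat.le_add_right n r)
  have hSnn : ∀ l : Fin s, 0 ≤ deltaSBase K (fun x => w x l) r B := by
    intro l
    apply Real.sSup_nonneg
    rintro t ⟨x, hx, rfl⟩
    exact mul_nonneg (norm_nonneg _)
      (Finset.prod_nonneg fun i _ => pow_nonneg (hwpos _ (hx i) l).le r)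
  have hVnn : 0 ≤ deltaVBase s K w hw r B := by
    apply Real.sSup_nonneg
    rintro t ⟨T, hT, rfl⟩
    exact norm_nonneg _
  by_cases hl0 : lr n r = 0
  · simp [deltaS, deltaV, hl0]
  have hl : 0 < lr n r := Nat.pos_of_ne_zero hl0
  set F : Fin s → (Fin (mr n r) → Pt n) → ℝ := fun l x =>
    ‖((Matrix.of fun i j => mono (B j) (x i)).det)‖ * ∏ i, w (x i) l ^ r with hF
  rcases Set.eq_empty_or_nonempty K with hKe | ⟨x0, hx0⟩
  · -- K is empty
    have hbase : ∀ l : Fin s, deltaSBase K (fun x => w x l) r B = 0 := by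
      intro l
      unfold deltaSBase
      convert Real.sSup_empty using 2
      rw [Set.eq_empty_iff_forall_notMem]
      rintro t ⟨x, hx, -⟩
      have := hx ⟨0, hm⟩
      rw [hKe] at this
      exact this
    have h1 : ∀ l : Fin s, deltaS K (fun x => w x l) r B = 0 := by
      intro l
      unfold deltaS
      rw [hbase l, Real.zero_rpow]
      simpa using hl0
    rw [Finset.prod_eq_zero (Finset.mem_univ ⟨0, hs⟩) (h1 _), Real.zero_rpow
      (by simpa using hs.ne')]
    exact Real.rpow_nonneg hVnn _
  -- main case : K nonempty
  set P : Set (Fin (mr n r) → Pt n) := Set.pi Set.univ (fun _ => K) with hPdef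
  have hPc : IsCompact P := isCompact_univ_pi fun _ => hK
  have hPne : P.Nonempty := ⟨fun _ => x0, fun i _ => hx0⟩
  have hFc : ∀ l : Fin s, ContinuousOn (F l) P := by
    intro l
    apply ContinuousOn.mul
    · apply Continuous.continuousOn
      apply continuous_norm.comp
      apply Continuous.matrix_det
      apply continuous_matrix
      intro i j
      exact (mono_continuous (B j)).comp (continuous_apply i)
    · apply continuousOn_finset_prod
      intro i _
      have h1 : ContinuousOn (fun x : Fin (mr n r) → Pt n => w (x i)) P := by
        apply hw.comp (continuous_apply i).continuousOn
        intro x hx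
        exact hx i (Set.mem_univ i)
      exact (((continuous_apply l).comp_continuousOn h1).pow r)
  choose X hXP hXmax using fun l => hPc.exists_isMaxOn hPne (hFc l)
  have hXK : ∀ (l : Fin s) i, X l i ∈ K := fun l i => hXP l i (Set.mem_univ i)
  have hFnn : ∀ l : Fin s, 0 ≤ F l (X l) := by
    intro l
    exact mul_nonneg (norm_nonneg _)
      (Finset.prod_nonneg fun i _ => pow_nonneg (hwpos _ (hXK l i) l).le r)
  have hSle : ∀ l : Fin s, deltaSBase K (fun x => w x l) r B ≤ F l (X l) := by
    intro l
    apply Real.sSup_le _ (hFnn l)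
    rintro t ⟨x, hx, rfl⟩
    exact hXmax l (fun i _ => hx i)
  -- the functionals
  set pt : Fin (mr n r) × Fin s → ↥K := fun i => ⟨X i.2 i.1, hXK i.2 i.1⟩ with hpt
  set T : (Fin (mr n r) × Fin s) → (C(↥K, Vec s) →L[ℂ] ℂ) := fun i =>
    (EuclideanSpace.proj (𝕜 := ℂ) i.2).comp (ContinuousMap.evalCLM ℂ (pt i)) with hT
  have hTval : ∀ (i : Fin (mr n r) × Fin s) (f : C(↥K, Vec s)), T i f = f (pt i) i.2 :=
    fun i f => rfl
  have hTnorm : ∀ i, ‖T i‖ ≤ 1 := by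
    intro i
    apply ContinuousLinearMap.opNorm_le_bound _ zero_le_one
    intro f
    rw [one_mul, hTval]
    exact le_trans (coord_norm_le _ _) (f.norm_coe_le_norm (pt i))
  have hMat : (Matrix.of fun i j => T i (qwCont K w hw B r j)) =
      Matrix.blockDiagonal (fun l : Fin s => Matrix.of fun a b =>
        ((w (X l a) l : ℂ)) ^ r * mono (B b) (X l a)) := by
    ext ⟨a, l⟩ ⟨b, l'⟩
    rw [Matrix.blockDiagonal_apply, Matrix.of_apply, hTval]
    show wodot w r (qb B (b, l')) (X l a) l = _
    unfold wodot qb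
    simp only [EuclideanSpace.single_apply]
    by_cases h : l = l' <;> simp [h]
  have hdet : ‖(Matrix.det (Matrix.of fun i j => T i (qwCont K w hw B r j)))‖
      = ∏ l : Fin s, F l (X l) := by
    rw [hMat, Matrix.det_blockDiagonal, norm_prod]
    apply Finset.prod_congr rfl
    intro l _
    rw [Matrix.det_mul_column (fun a => ((w (X l a) l : ℂ)) ^ r)
      (fun a b => mono (B b) (X l a) : Matrix (Fin (mr n r)) (Fin (mr n r)) ℂ), norm_mul, norm_prod, hF]
    dsimp only
    rw [mul_comm]
    congr 1
    apply Finset.prod_congr rfl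
    intro a _
    rw [norm_pow, Complex.norm_real, Real.norm_eq_abs, abs_of_pos (hwpos _ (hXK l a) l)]
  have hbdd : BddAbove {t : ℝ | ∃ T : (Fin (mr n r) × Fin s) → (C(↥K, Vec s) →L[ℂ] ℂ),
      (∀ i, ‖T i‖ ≤ 1) ∧
      t = ‖(Matrix.det (Matrix.of fun i j => T i (qwCont K w hw B r j)))‖} := by
    set C : ℝ := ∑ j : Fin (mr n r) × Fin s, ‖qwCont K w hw B r j‖ with hC
    refine ⟨(Nat.factorial (Fintype.card (Fin (mr n r) × Fin s))) •
      C ^ (Fintype.card (Fin (mr n r) × Fin s)), ?_⟩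
    rintro t ⟨T', hT', rfl⟩
    apply Matrix.det_le (abv := NormedField.toAbsoluteValue ℂ)
    intro i j
    calc ‖((Matrix.of fun i j => T' i (qwCont K w hw B r j)) i j)‖
        ≤ ‖T' i‖ * ‖qwCont K w hw B r j‖ := (T' i).le_opNorm _
      _ ≤ 1 * C := mul_le_mul (hT' i)
          (Finset.single_le_sum (fun j _ => norm_nonneg _) (Finset.mem_univ j))
          (norm_nonneg _) zero_le_one
      _ = C := one_mul C
  have hprod_le : ∏ l : Fin s, deltaSBase K (fun x => w x l) r B ≤ deltaVBase s K w hw r B := by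
    calc ∏ l : Fin s, deltaSBase K (fun x => w x l) r B
        ≤ ∏ l : Fin s, F l (X l) :=
          Finset.prod_le_prod (fun l _ => hSnn l) (fun l _ => hSle l)
      _ ≤ deltaVBase s K w hw r B := le_csSup hbdd ⟨T, hTnorm, hdet.symm⟩
  -- final rpow algebra
  unfold deltaS deltaV
  rw [Real.finset_prod_rpow _ _ (fun l _ => hSnn l) _,
    ← Real.rpow_mul (Finset.prod_nonneg fun l _ => hSnn l)]
  have hexp : (((lr n r : ℕ) : ℝ))⁻¹ * ((s : ℝ))⁻¹ = (((s * lr n r : ℕ) : ℝ))⁻¹ := by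
    push_cast
    rw [mul_inv, mul_comm]
  rw [hexp]
  exact Real.rpow_le_rpow (Finset.prod_nonneg fun l _ => hSnn l) hprod_le
    (by positivity)
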